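/- For every s ∈ S, in the two-variable formal power series ring ℂ⟦X,Y⟧, substituting X ↦ X² − Y⁴ and Y ↦ Y⁴ into φ_{σ(s)} yields the factorization φ_{σ(s)}(X² − Y⁴, Y⁴) = (X + Σ_{n≥0} a_n^s Y^{2+4n})·(X − Σ_{n≥0} a_n^s Y^{2+4n}); in particular φ_s divides φ_{σ(s)}(X² − Y⁴, Y⁴) in ℂ⟦X,Y⟧. -/

import Mathlib

noncomputable section

/-- The space of binary sequences `{0,1}^ℕ`. -/
abbrev BinSeq := ℕ → Fin 2

/-- The left-shift map `σ`. -/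
def shift (s : BinSeq) : BinSeq := fun n => s (n + 1)

/-- `a : S → ℕ → ℂ` satisfies the recursion defining the coefficients `aₙˢ`. -/
def IsCoeffFamily (a : BinSeq → ℕ → ℂ) : Prop :=
  (∀ s : BinSeq, a s 0 = (-1 : ℂ) ^ (s 0 : ℕ)) ∧
  (∀ (s : BinSeq) (n : ℕ), a s (n + 1) =
    if 4 ∣ n then
      -(a (shift s) (n / 4)) / (2 * a s 0)
        - (∑ i ∈ Finset.Ico 1 (n + 1), a s i * a s (n + 1 - i)) / (2 * a s 0)
    else
      -(∑ i ∈ Finset.Ico 1 (n + 1), a s i * a s (n + 1 - i)) / (2 * a s 0))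

/-- The series `Σ_{n≥0} aₙˢ Y^(2+4n)` viewed inside `ℂ⟦X,Y⟧`
(variable `0` is `X`, variable `1` is `Y`). -/
def tailSer (a : BinSeq → ℕ → ℂ) (s : BinSeq) : MvPowerSeries (Fin 2) ℂ :=
  fun d => if d 0 = 0 ∧ d 1 % 4 = 2 then a s ((d 1 - 2) / 4) else 0

/-- The two-variable series `φ_s = X + Σ_{n≥0} aₙˢ Y^(2+4n) ∈ ℂ⟦X,Y⟧`. -/
def phi (a : BinSeq → ℕ → ℂ) (s : BinSeq) : MvPowerSeries (Fin 2) ℂ :=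
  MvPowerSeries.X 0 + tailSer a s

/-- The substitution `X ↦ X² − Y⁴`, `Y ↦ Y⁴` on `ℂ⟦X,Y⟧`, i.e. the unique continuous
`ℂ`-algebra endomorphism of `ℂ⟦X,Y⟧` sending `X` to `X² − Y⁴` and `Y` to `Y⁴`,
defined coefficientwise: `φ = Σ_{(i,j)} c_{ij} X^i Y^j` is sent to
`Σ_{(i,j)} c_{ij} (X² − Y⁴)^i (Y⁴)^j`.  This sum is locally finite: the coefficient of a
monomial `e` in `(X² − Y⁴)^i (Y⁴)^j` vanishes whenever `2i + 4j` exceeds the total degree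
of `e`, so only the finitely many pairs `(i,j)` with `i, j ≤ e 0 + e 1` can contribute. -/
def substF (φ : MvPowerSeries (Fin 2) ℂ) : MvPowerSeries (Fin 2) ℂ :=
  fun e =>
    ∑ p ∈ Finset.range (e 0 + e 1 + 1) ×ˢ Finset.range (e 0 + e 1 + 1),
      MvPowerSeries.coeff (Finsupp.single 0 p.1 + Finsupp.single 1 p.2) φ *
        MvPowerSeries.coeff e
          (((MvPowerSeries.X 0 : MvPowerSeries (Fin 2) ℂ) ^ 2 - MvPowerSeries.X 1 ^ 4) ^ p.1 *
            MvPowerSeries.X 1 ^ (4 * p.2))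



lemma fin2_ext_iff (e d : Fin 2 →₀ ℕ) : e = d ↔ e 0 = d 0 ∧ e 1 = d 1 := by
  constructor
  · rintro rfl; exact ⟨rfl, rfl⟩
  · rintro ⟨h0, h1⟩; ext i; fin_cases i <;> assumption

lemma eq_single0_iff (e : Fin 2 →₀ ℕ) (n : ℕ) :
    e = Finsupp.single (0 : Fin 2) n ↔ e 0 = n ∧ e 1 = 0 := by
  rw [fin2_ext_iff]; simp [Finsupp.single_apply]

lemma eq_single1_iff (e : Fin 2 →₀ ℕ) (n : ℕ) :
    e = Finsupp.single (1 : Fin 2) n ↔ e 0 = 0 ∧ e 1 = n := by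
  rw [fin2_ext_iff]; simp [Finsupp.single_apply, eq_comm]

lemma a0_sq {a : BinSeq → ℕ → ℂ} (ha : IsCoeffFamily a) (s : BinSeq) :
    a s 0 * a s 0 = 1 := by
  rw [ha.1 s, ← mul_pow, neg_mul_neg, one_mul, one_pow]

lemma a0_ne {a : BinSeq → ℕ → ℂ} (ha : IsCoeffFamily a) (s : BinSeq) :
    a s 0 ≠ 0 := by
  intro h
  have := a0_sq ha s
  rw [h, mul_zero] at this
  exact zero_ne_one this

lemma csum {a : BinSeq → ℕ → ℂ} (ha : IsCoeffFamily a) (s : BinSeq) (n : ℕ) :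
    ∑ i ∈ Finset.range (n + 2), a s i * a s (n + 1 - i) =
      if 4 ∣ n then -a (shift s) (n / 4) else 0 := by
  have h0 := a0_ne ha s
  rw [Finset.sum_range_succ, Finset.range_eq_Ico,
    Finset.sum_eq_sum_Ico_succ_bot (by omega : 0 < n + 1)]
  simp only [Nat.sub_zero, Nat.sub_self, zero_add]
  have hrec := ha.2 s n
  by_cases h4 : 4 ∣ n <;> simp only [h4, if_true, if_false] at hrec ⊢ <;>
    rw [hrec] <;> field_simp <;> ring

lemma tsum_eq {a : BinSeq → ℕ → ℂ} (ha : IsCoeffFamily a) (s : BinSeq) (N : ℕ) :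
    ∑ i ∈ Finset.range (N + 1),
      (if i % 4 = 2 then a s ((i - 2) / 4) else 0) *
      (if (N - i) % 4 = 2 then a s ((N - i - 2) / 4) else 0) =
      (if N = 4 then 1 else 0) - (if N % 16 = 8 then a (shift s) ((N - 8) / 16) else 0) := by
  by_cases h4 : N % 4 = 0 ∧ 4 ≤ N
  · obtain ⟨M, rfl⟩ : ∃ M, N = 4 * M + 4 := ⟨N / 4 - 1, by omega⟩
    have hbij : ∑ i ∈ Finset.range (4 * M + 4 + 1),
        (if i % 4 = 2 then a s ((i - 2) / 4) else 0) *
        (if (4 * M + 4 - i) % 4 = 2 then a s ((4 * M + 4 - i - 2) / 4) else 0) =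
        ∑ u ∈ Finset.range (M + 1), a s u * a s (M - u) := by
      apply Finset.sum_bij_ne_zero (i := fun i _ _ => (i - 2) / 4)
      · intro i h1 h2
        rw [Finset.mem_range] at h1 ⊢
        have hc1 : i % 4 = 2 := by
          by_contra hc; rw [if_neg hc, zero_mul] at h2; exact h2 rfl
        have hc2 : (4 * M + 4 - i) % 4 = 2 := by
          by_contra hc; rw [if_neg hc, mul_zero] at h2; exact h2 rfl
        omega
      · intro i h1 hi1 j h2 hj1 hij
        have hc1 : i % 4 = 2 := by
          by_contra hc; rw [if_neg hc, zero_mul] at hi1; exact hi1 rfl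
        have hc2 : j % 4 = 2 := by
          by_contra hc; rw [if_neg hc, zero_mul] at hj1; exact hj1 rfl
        omega
      · intro u hu hgu
        rw [Finset.mem_range] at hu
        refine ⟨4 * u + 2, Finset.mem_range.mpr (by omega), ?_, by omega⟩
        rw [if_pos (by omega : (4 * u + 2) % 4 = 2),
          if_pos (by omega : (4 * M + 4 - (4 * u + 2)) % 4 = 2),
          (by omega : (4 * u + 2 - 2) / 4 = u),
          (by omega : (4 * M + 4 - (4 * u + 2) - 2) / 4 = M - u)]
        exact hgu
      · intro i h1 h2
        rw [Finset.mem_range] at h1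
        have hc1 : i % 4 = 2 := by
          by_contra hc; rw [if_neg hc, zero_mul] at h2; exact h2 rfl
        have hc2 : (4 * M + 4 - i) % 4 = 2 := by
          by_contra hc; rw [if_neg hc, mul_zero] at h2; exact h2 rfl
        rw [if_pos hc1, if_pos hc2, (by omega : (4 * M + 4 - i - 2) / 4 = M - (i - 2) / 4)]
    rw [hbij]
    rcases M with _ | m
    · norm_num
      exact a0_sq ha s
    · rw [(by ring_nf : m + 1 + 1 = m + 2), csum ha s m]
      rw [if_neg (by omega : ¬ 4 * (m + 1) + 4 = 4), zero_sub]
      by_cases hm : 4 ∣ m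
      · rw [if_pos hm, if_pos (by omega : (4 * (m + 1) + 4) % 16 = 8)]
        congr 2
        omega
      · rw [if_neg hm, if_neg (by omega : ¬ (4 * (m + 1) + 4) % 16 = 8), neg_zero]
  · rw [if_neg (by omega : ¬ N = 4), if_neg (by omega : ¬ N % 16 = 8), sub_zero]
    apply Finset.sum_eq_zero
    intro i hi
    rw [Finset.mem_range] at hi
    by_cases hc : i % 4 = 2
    · rw [if_neg (by omega : ¬ (N - i) % 4 = 2), mul_zero]
    · rw [if_neg hc, zero_mul]

lemma coeff_Xsq_sub_Y4 (e : Fin 2 →₀ ℕ) :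
    MvPowerSeries.coeff e
      (((MvPowerSeries.X 0 : MvPowerSeries (Fin 2) ℂ) ^ 2 - MvPowerSeries.X 1 ^ 4)) =
      (if e 0 = 2 ∧ e 1 = 0 then 1 else 0) - (if e 0 = 0 ∧ e 1 = 4 then 1 else 0) := by
  rw [map_sub, MvPowerSeries.coeff_X_pow, MvPowerSeries.coeff_X_pow,
    if_congr (eq_single0_iff e 2) rfl rfl, if_congr (eq_single1_iff e 4) rfl rfl]

lemma coeff_Y_pow (e : Fin 2 →₀ ℕ) (m : ℕ) :
    MvPowerSeries.coeff e ((MvPowerSeries.X 1 : MvPowerSeries (Fin 2) ℂ) ^ m) =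
      if e 0 = 0 ∧ e 1 = m then 1 else 0 := by
  rw [MvPowerSeries.coeff_X_pow, if_congr (eq_single1_iff e m) rfl rfl]

lemma coeff_tail (a : BinSeq → ℕ → ℂ) (s : BinSeq) (d : Fin 2 →₀ ℕ) :
    MvPowerSeries.coeff d (tailSer a s) =
      if d 0 = 0 ∧ d 1 % 4 = 2 then a s ((d 1 - 2) / 4) else 0 := by
  rw [MvPowerSeries.coeff_apply]
  rfl

lemma coeff_phi (a : BinSeq → ℕ → ℂ) (t : BinSeq) (i j : ℕ) :
    MvPowerSeries.coeff (Finsupp.single 0 i + Finsupp.single 1 j) (phi a t) =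
      (if i = 1 ∧ j = 0 then 1 else 0) +
      (if i = 0 ∧ j % 4 = 2 then a t ((j - 2) / 4) else 0) := by
  rw [phi, map_add, MvPowerSeries.coeff_X]
  congr 1
  · rw [if_congr (eq_single0_iff _ 1) rfl rfl]
    simp [Finsupp.single_apply]
  · rw [coeff_tail]
    simp [Finsupp.single_apply]

lemma substF_phi (a : BinSeq → ℕ → ℂ) (t : BinSeq) (e : Fin 2 →₀ ℕ) :
    substF (phi a t) e =
      ((if e 0 = 2 ∧ e 1 = 0 then (1:ℂ) else 0) - (if e 0 = 0 ∧ e 1 = 4 then 1 else 0))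
      + (if e 0 = 0 ∧ e 1 % 16 = 8 then a t ((e 1 - 8) / 16) else 0) := by
  have key : ∀ p ∈ Finset.range (e 0 + e 1 + 1) ×ˢ Finset.range (e 0 + e 1 + 1),
      MvPowerSeries.coeff (Finsupp.single 0 p.1 + Finsupp.single 1 p.2) (phi a t) *
        MvPowerSeries.coeff e
          (((MvPowerSeries.X 0 : MvPowerSeries (Fin 2) ℂ) ^ 2 - MvPowerSeries.X 1 ^ 4) ^ p.1 *
            MvPowerSeries.X 1 ^ (4 * p.2)) =
      (if p = ((1:ℕ), (0:ℕ)) then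
          MvPowerSeries.coeff e
            ((MvPowerSeries.X 0 : MvPowerSeries (Fin 2) ℂ) ^ 2 - MvPowerSeries.X 1 ^ 4)
        else 0)
      + (if p = ((0:ℕ), e 1 / 4) then
          (if e 0 = 0 ∧ e 1 % 16 = 8 then a t ((e 1 - 8) / 16) else 0) else 0) := by
    rintro ⟨i, j⟩ _
    rw [coeff_phi, add_mul]
    congr 1
    · by_cases h : i = 1 ∧ j = 0
      · obtain ⟨rfl, rfl⟩ := h
        simp
      · rw [if_neg h, zero_mul, if_neg (by simpa [Prod.ext_iff] using h)]
    · by_cases h : i = 0 ∧ j % 4 = 2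
      · obtain ⟨rfl, hj⟩ := h
        rw [if_pos ⟨rfl, hj⟩, pow_zero, one_mul, coeff_Y_pow]
        by_cases h2 : e 0 = 0 ∧ e 1 = 4 * j
        · obtain ⟨h0, h1⟩ := h2
          rw [if_pos ⟨h0, h1⟩, mul_one,
            if_pos (by rw [Prod.ext_iff]; exact ⟨rfl, by omega⟩), if_pos ⟨h0, by omega⟩]
          congr 1
          omega
        · rw [if_neg h2, mul_zero]
          symm
          rw [ite_eq_right_iff]
          intro hp
          rw [Prod.ext_iff] at hp
          obtain ⟨-, hp2⟩ := hp
          rw [if_neg]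
          rintro ⟨h0, h16⟩
          exact h2 ⟨h0, by simp at hp2; omega⟩
      · rw [if_neg h, zero_mul]
        symm
        rw [ite_eq_right_iff]
        intro hp
        rw [Prod.ext_iff] at hp
        obtain ⟨hp1, hp2⟩ := hp
        simp only at hp1 hp2
        rw [if_neg]
        rintro ⟨h0, h16⟩
        exact h ⟨hp1, by omega⟩
  show (∑ p ∈ _, _) = _
  rw [Finset.sum_congr rfl key, Finset.sum_add_distrib,
    Finset.sum_ite_eq' _ ((1:ℕ), (0:ℕ)), Finset.sum_ite_eq' _ ((0:ℕ), e 1 / 4)]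
  rw [if_pos (by simp [Finset.mem_product]; omega :
    ((0:ℕ), e 1 / 4) ∈ Finset.range (e 0 + e 1 + 1) ×ˢ Finset.range (e 0 + e 1 + 1))]
  rcases Nat.eq_zero_or_pos (e 0 + e 1) with h | h
  · have h0 : e 0 = 0 := by omega
    have h1 : e 1 = 0 := by omega
    rw [if_neg (by simp [Finset.mem_product]; omega)]
    norm_num [h0, h1]
  · rw [if_pos (by simp [Finset.mem_product]; omega), coeff_Xsq_sub_Y4]

lemma coeff_tailsq {a : BinSeq → ℕ → ℂ} (ha : IsCoeffFamily a) (s : BinSeq) (e : Fin 2 →₀ ℕ) :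
    MvPowerSeries.coeff e (tailSer a s * tailSer a s) =
      (if e 0 = 0 ∧ e 1 = 4 then 1 else 0)
      - (if e 0 = 0 ∧ e 1 % 16 = 8 then a (shift s) ((e 1 - 8) / 16) else 0) := by
  rw [MvPowerSeries.coeff_mul]
  by_cases he : e 0 = 0
  · obtain ⟨N, rfl⟩ : ∃ N, e = Finsupp.single 1 N :=
      ⟨e 1, by rw [eq_single1_iff]; exact ⟨he, rfl⟩⟩
    have h0 : (Finsupp.single (1 : Fin 2) N) 0 = 0 := by simp
    have h1 : (Finsupp.single (1 : Fin 2) N) 1 = N := by simp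
    rw [h0, h1]
    have hts : ∀ i : ℕ, MvPowerSeries.coeff (Finsupp.single (1 : Fin 2) i) (tailSer a s) =
        if i % 4 = 2 then a s ((i - 2) / 4) else 0 := by
      intro i
      rw [coeff_tail]
      simp
    rw [Finsupp.antidiagonal_single, Finset.sum_map]
    simp only [Function.Embedding.coe_prodMap, Function.Embedding.coeFn_mk, Prod.map_fst,
      Prod.map_snd, hts]
    rw [Finset.Nat.sum_antidiagonal_eq_sum_range_succ_mk]
    simp only [true_and]
    exact tsum_eq ha s N
  · rw [if_neg (fun h => he h.1), if_neg (fun h => he h.1), sub_zero]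
    apply Finset.sum_eq_zero
    rintro ⟨d1, d2⟩ hp
    replace hp : d1 + d2 = e := Finset.HasAntidiagonal.mem_antidiagonal.mp hp
    dsimp only at hp ⊢
    have hsum : d1 0 + d2 0 = e 0 := by
      rw [← hp]
      simp
    rw [coeff_tail, coeff_tail]
    rcases Nat.eq_zero_or_pos (d1 0) with hd | hd
    · rw [if_neg (by rintro ⟨hc1, -⟩; omega : ¬(d2 0 = 0 ∧ d2 1 % 4 = 2)), mul_zero]
    · rw [if_neg (by rintro ⟨hc1, -⟩; omega : ¬(d1 0 = 0 ∧ d1 1 % 4 = 2)), zero_mul]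

/-- Substituting `X ↦ X² − Y⁴`, `Y ↦ Y⁴` into `φ_{σ(s)}` yields the factorization
`φ_{σ(s)}(X² − Y⁴, Y⁴) = (X + Σ aₙˢ Y^(2+4n))·(X − Σ aₙˢ Y^(2+4n))`;
in particular `φ_s` divides `φ_{σ(s)}(X² − Y⁴, Y⁴)` in `ℂ⟦X,Y⟧`. -/
theorem stmt2 (a : BinSeq → ℕ → ℂ) (ha : IsCoeffFamily a) (s : BinSeq) :
    substF (phi a (shift s)) =
      (MvPowerSeries.X 0 + tailSer a s) * (MvPowerSeries.X 0 - tailSer a s) ∧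
    phi a s ∣ substF (phi a (shift s)) := by
  have hfac : substF (phi a (shift s)) =
      (MvPowerSeries.X 0 + tailSer a s) * (MvPowerSeries.X 0 - tailSer a s) := by
    have hms : (MvPowerSeries.X 0 + tailSer a s) *
        (MvPowerSeries.X (0 : Fin 2) - tailSer a s) =
        MvPowerSeries.X 0 * MvPowerSeries.X 0 - tailSer a s * tailSer a s :=
      (mul_self_sub_mul_self _ _).symm
    rw [hms]
    apply MvPowerSeries.ext
    intro e
    rw [MvPowerSeries.coeff_apply, substF_phi, map_sub, coeff_tailsq ha, ← sq,
      MvPowerSeries.coeff_X_pow, if_congr (eq_single0_iff e 2) rfl rfl]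
    ring
  exact ⟨hfac, MvPowerSeries.X 0 - tailSer a s, by rw [hfac, phi]⟩
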